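/- Phragmén's ordered method satisfies the following proportionality criterion: let 1 ≤ ℓ ≤ M and let D ⊆ C be a set of ℓ candidates. If the total number of ballots whose first ℓ entries form exactly the set D (in any order) is greater than (ℓ/(M+1))·V, then every possible outcome E of Phragmén's ordered method for M seats contains all ℓ candidates of D, i.e. D ⊆ E. -/

import Mathlib

open Finset

/-- The top candidate of the ballot `α` given the set `E` of already elected
candidates: the first entry of `α` not in `E` (if any). -/
def topOf {C : Type} [DecidableEq C] (E : Finset C) (α : List C) : Option C :=
  α.find? (fun c => decide (c ∉ E))

/-- The set of voters whose ballot is currently counted for candidate `i`,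
given the set `E` of already elected candidates. -/
def poCounted {C : Type} [Fintype C] [DecidableEq C] {n : ℕ}
    (b : Fin n → List C) (E : Finset C) (i : C) : Finset (Fin n) :=
  Finset.univ.filter (fun k => topOf E (b k) = some i)

/-- Phragmén's `t_i = (1 + Σ_{α∈A_i} v_α r_α)/(Σ_{α∈A_i} v_α)` for the current
loads `r` and elected set `E` (each individual ballot has weight 1). -/
def poT {C : Type} [Fintype C] [DecidableEq C] {n : ℕ}
    (b : Fin n → List C) (r : Fin n → ℚ) (E : Finset C) (i : C) : ℚ :=
  (1 + ∑ k ∈ poCounted b E i, r k) / ((poCounted b E i).card : ℚ)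

/-- The ballot loads after electing the candidates in the list `l`
(most recently elected first). -/
def poLoads {C : Type} [Fintype C] [DecidableEq C] {n : ℕ}
    (b : Fin n → List C) : List C → Fin n → ℚ
  | [], _ => 0
  | i :: l, k =>
      if topOf l.toFinset (b k) = some i then poT b (poLoads b l) l.toFinset i
      else poLoads b l k

/-- `l` (most recently elected first) is a valid sequence of elections for
Phragmén's ordered method. -/
def poValid {C : Type} [Fintype C] [DecidableEq C] {n : ℕ}
    (b : Fin n → List C) : List C → Prop
  | [] => True
  | i :: l => poValid b l ∧ i ∉ l ∧ 0 < (poCounted b l.toFinset i).card ∧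
      ∀ j : C, j ∉ l → 0 < (poCounted b l.toFinset j).card →
        poT b (poLoads b l) l.toFinset i ≤ poT b (poLoads b l) l.toFinset j

/-- `S` is a possible outcome of Phragmén's ordered method for `M` seats. -/
def POOutcome {C : Type} [Fintype C] [DecidableEq C] {n : ℕ}
    (b : Fin n → List C) (M : ℕ) (S : Finset C) : Prop :=
  ∃ l : List C, poValid b l ∧ l.length = M ∧ l.toFinset = S

section Helpers
variable {C : Type} [Fintype C] [DecidableEq C] {n : ℕ} (b : Fin n → List C)

theorem topOf_cons (E : Finset C) (c : C) (β : List C) :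
    topOf E (c :: β) = if c ∈ E then topOf E β else some c := by
  by_cases h : c ∈ E
  · rw [topOf, List.find?_cons_of_neg (by simpa using h), if_pos h]; rfl
  · rw [topOf, List.find?_cons_of_pos (by simpa using h), if_neg h]

theorem topOf_mem {E : Finset C} {β : List C} {c : C} (h : topOf E β = some c) :
    c ∉ E ∧ c ∈ β :=
  ⟨by simpa using List.find?_some h, List.mem_of_find?_eq_some h⟩

theorem topOf_insert {E : Finset C} {β : List C} {c i : C} (hne : c ≠ i)
    (h : topOf E β = some c) : topOf (insert i E) β = some c := by
  induction β with
  | nil => simp [topOf] at h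
  | cons a β ih =>
    rw [topOf_cons] at h ⊢
    by_cases ha : a ∈ E
    · rw [if_pos ha] at h
      rw [if_pos (Finset.mem_insert_of_mem ha)]; exact ih h
    · rw [if_neg ha] at h
      obtain rfl : a = c := by simpa using h
      rw [if_neg (by simp [ha, hne])]

theorem topOf_insert_rev {E : Finset C} {β : List C} {c i : C}
    (h : topOf (insert i E) β = some c) :
    topOf E β = some c ∨ topOf E β = some i := by
  induction β with
  | nil => simp [topOf] at h
  | cons a β ih =>
    rw [topOf_cons] at h ⊢
    by_cases ha : a ∈ E
    · rw [if_pos (Finset.mem_insert_of_mem ha)] at h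
      rw [if_pos ha]; exact ih h
    · rw [if_neg ha]
      by_cases hai : a = i
      · right; rw [hai]
      · rw [if_neg (by simp [ha, hai])] at h; left; exact h

theorem mem_poCounted {E : Finset C} {i : C} {k : Fin n} :
    k ∈ poCounted b E i ↔ topOf E (b k) = some i := by
  simp [poCounted]

end Helpers
set_option linter.unusedSectionVars false

section Helpers2
variable {C : Type} [Fintype C] [DecidableEq C] {n : ℕ} (b : Fin n → List C)

/-- find the top among the first `m` entries. -/
theorem top_in_D {E D : Finset C} {β : List C} {m : ℕ}
    (hβ : (β.take m).toFinset = D) (hnD : ¬ D ⊆ E) :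
    ∃ d, d ∈ D ∧ topOf E β = some d := by
  obtain ⟨d₀, hd₀D, hd₀E⟩ := Finset.not_subset.mp hnD
  have hd₀ : d₀ ∈ β.take m := by rw [← List.mem_toFinset, hβ]; exact hd₀D
  have hsome : ((β.take m).find? (fun c => decide (c ∉ E))).isSome := by
    rw [List.find?_isSome]; exact ⟨d₀, hd₀, by simpa using hd₀E⟩
  obtain ⟨c, hc⟩ := Option.isSome_iff_exists.mp hsome
  refine ⟨c, ?_, ?_⟩
  · rw [← hβ, List.mem_toFinset]; exact List.mem_of_find?_eq_some hc
  · rw [topOf, ← List.take_append_drop m β, List.find?_append, hc]; rfl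

/-- the `t`-value of the last elected candidate (0 for the empty list). -/
def sval : List C → ℚ
  | [] => 0
  | i :: l => poT b (poLoads b l) l.toFinset i

theorem poLoads_cons (i : C) (l : List C) (k : Fin n) :
    poLoads b (i :: l) k =
      if topOf l.toFinset (b k) = some i then sval b (i :: l) else poLoads b l k := rfl

theorem sval_step {i : C} {l : List C} (hv : poValid b (i :: l)) :
    sval b l ≤ sval b (i :: l) := by
  obtain ⟨hvl, hil, hpos, -⟩ := hv
  have hcard : (0:ℚ) < ((poCounted b l.toFinset i).card : ℚ) := by exact_mod_cast hpos
  rw [show sval b (i :: l) = poT b (poLoads b l) l.toFinset i from rfl, poT,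
    le_div_iff₀ hcard]
  match l with
  | [] =>
    simp only [sval, poLoads, Finset.sum_const_zero, zero_mul]
    linarith
  | j :: l' =>
    set E' := l'.toFinset with hE'
    have hEins : (j :: l').toFinset = insert j E' := by simp [hE']
    set s := sval b (j :: l') with hs
    set A := poCounted b (j :: l').toFinset i with hA
    have hij : i ≠ j := by simp [List.mem_cons] at hil; exact hil.1
    -- split A
    have hsplit : ∑ k ∈ A, poLoads b (j :: l') k =
        (∑ k ∈ A.filter (fun k => topOf E' (b k) = some i), poLoads b l' k) +
        (A.filter (fun k => ¬ topOf E' (b k) = some i)).card * s := by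
      rw [← Finset.sum_filter_add_sum_filter_not A (fun k => topOf E' (b k) = some i)]
      congr 1
      · refine Finset.sum_congr rfl fun k hk => ?_
        have h1 := (Finset.mem_filter.mp hk).2
        rw [poLoads_cons, if_neg (by rw [h1]; simp [hij])]
      · rw [Finset.sum_congr rfl fun k hk => ?_, Finset.sum_const, nsmul_eq_mul]
        obtain ⟨hkA, hk2⟩ := Finset.mem_filter.mp hk
        have hkt : topOf (insert j E') (b k) = some i := by
          rw [← hEins]; exact (mem_poCounted b).mp (hA ▸ hkA)
        rcases topOf_insert_rev hkt with h | h
        · exact absurd h hk2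
        · rw [poLoads_cons, if_pos h, ← hs]
    -- the filtered set equals poCounted b E' i
    have hfil : A.filter (fun k => topOf E' (b k) = some i) = poCounted b E' i := by
      ext k
      simp only [Finset.mem_filter, hA, mem_poCounted, hEins]
      constructor
      · rintro ⟨-, h⟩; exact h
      · intro h; exact ⟨topOf_insert hij h, h⟩
    have key : s * ((A.filter (fun k => topOf E' (b k) = some i)).card : ℚ) ≤
        1 + ∑ k ∈ A.filter (fun k => topOf E' (b k) = some i), poLoads b l' k := by
      rw [hfil]
      by_cases hC : 0 < (poCounted b E' i).card
      · have hmin := hvl.2.2.2 i (by simp [List.mem_cons] at hil; exact hil.2) hC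
        have hcard' : (0:ℚ) < ((poCounted b E' i).card : ℚ) := by exact_mod_cast hC
        rw [hs] at *
        have : sval b (j :: l') ≤ poT b (poLoads b l') l'.toFinset i := hmin
        rw [poT, le_div_iff₀ hcard'] at this
        linarith
      · have he : poCounted b E' i = ∅ := Finset.card_eq_zero.mp (by omega)
        simp [he]
    have hAsplit : (A.card : ℚ) =
        ((A.filter (fun k => topOf E' (b k) = some i)).card : ℚ) +
        ((A.filter (fun k => ¬ topOf E' (b k) = some i)).card : ℚ) := by
      rw [← Nat.cast_add, ← Finset.card_filter_add_card_filter_not (s := A)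
        (p := fun k => topOf E' (b k) = some i)]
    rw [hsplit, hAsplit]
    ring_nf
    nlinarith [key]
end Helpers2

section Helpers3
set_option linter.unusedSectionVars false
variable {C : Type} [Fintype C] [DecidableEq C] {n : ℕ} (b : Fin n → List C)

theorem loads_nonneg : ∀ l : List C, poValid b l → ∀ k, 0 ≤ poLoads b l k := by
  intro l
  induction l with
  | nil => intro _ k; simp [poLoads]
  | cons i l ih =>
    intro hv k
    have h0 := ih hv.1
    rw [poLoads_cons]
    split
    · rw [show sval b (i :: l) = poT b (poLoads b l) l.toFinset i from rfl, poT]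
      apply div_nonneg
      · have : 0 ≤ ∑ k ∈ poCounted b l.toFinset i, poLoads b l k :=
          Finset.sum_nonneg fun k _ => h0 k
        linarith
      · positivity
    · exact h0 k

theorem loads_le : ∀ l : List C, poValid b l → ∀ k, poLoads b l k ≤ sval b l := by
  intro l
  induction l with
  | nil => intro _ k; simp [poLoads, sval]
  | cons i l ih =>
    intro hv k
    have hmono := sval_step b hv
    rw [poLoads_cons]
    split
    · exact le_refl _
    · exact le_trans (ih hv.1 k) hmono

theorem sum_loads : ∀ l : List C, poValid b l →
    ∑ k, poLoads b l k = (l.length : ℚ) := by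
  intro l
  induction l with
  | nil => simp [poLoads]
  | cons i l ih =>
    intro hv
    obtain ⟨hvl, -, hpos, -⟩ := hv
    have hcard : (0:ℚ) < ((poCounted b l.toFinset i).card : ℚ) := by exact_mod_cast hpos
    have hsum : ∑ k, poLoads b (i :: l) k =
        (∑ k ∈ Finset.univ \ poCounted b l.toFinset i, poLoads b l k) +
        (poCounted b l.toFinset i).card * sval b (i :: l) := by
      rw [← Finset.sum_sdiff (Finset.subset_univ (poCounted b l.toFinset i))]
      congr 1
      · refine Finset.sum_congr rfl fun k hk => ?_
        rw [poLoads_cons,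
          if_neg (fun h => (Finset.mem_sdiff.mp hk).2 ((mem_poCounted b).mpr h))]
      · rw [Finset.sum_congr rfl fun k hk => ?_, Finset.sum_const, nsmul_eq_mul]
        rw [poLoads_cons, if_pos ((mem_poCounted b).mp hk)]
    rw [Finset.sum_sdiff_eq_sub (Finset.subset_univ _)] at hsum
    have hts : ((poCounted b l.toFinset i).card : ℚ) * sval b (i :: l) =
        1 + ∑ k ∈ poCounted b l.toFinset i, poLoads b l k := by
      rw [show sval b (i :: l) = poT b (poLoads b l) l.toFinset i from rfl, poT]
      field_simp
    rw [hsum, hts, ih hvl]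
    push_cast [List.length_cons]
    ring

end Helpers3

section Helpers4
set_option linter.unusedSectionVars false
variable {C : Type} [Fintype C] [DecidableEq C] {n : ℕ} (b : Fin n → List C)

theorem sval_nonneg {l : List C} (hv : poValid b l) : 0 ≤ sval b l := by
  match l with
  | [] => exact le_refl 0
  | i :: l =>
    rw [show sval b (i :: l) = poT b (poLoads b l) l.toFinset i from rfl, poT]
    apply div_nonneg
    · have : 0 ≤ ∑ k ∈ poCounted b l.toFinset i, poLoads b l k :=
        Finset.sum_nonneg fun k _ => loads_nonneg b l hv.1 k
      linarith
    · positivity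

theorem card_times_sval {i : C} {l : List C} (hv : poValid b (i :: l)) :
    ((poCounted b l.toFinset i).card : ℚ) * sval b (i :: l) =
      1 + ∑ k ∈ poCounted b l.toFinset i, poLoads b l k := by
  have hcard : (0:ℚ) < ((poCounted b l.toFinset i).card : ℚ) := by
    exact_mod_cast hv.2.2.1
  rw [show sval b (i :: l) = poT b (poLoads b l) l.toFinset i from rfl, poT]
  field_simp

theorem wload_le (W : Finset (Fin n)) (D : Finset C) (m : ℕ)
    (hW : ∀ k ∈ W, ((b k).take m).toFinset = D) :
    ∀ l : List C, poValid b l → ¬ D ⊆ l.toFinset →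
      ∑ k ∈ W, poLoads b l k ≤ ((l.toFinset ∩ D).card : ℚ) := by
  intro l
  induction l with
  | nil => intro _ _; simp [poLoads]
  | cons i l ih =>
    intro hv hnD
    have hsubE : l.toFinset ⊆ (i :: l).toFinset := by
      intro x hx; simp [List.mem_toFinset] at hx ⊢; exact Or.inr hx
    have hnD' : ¬ D ⊆ l.toFinset := fun h => hnD (h.trans hsubE)
    have IH := ih hv.1 hnD'
    set A := poCounted b l.toFinset i with hA
    set s := sval b (i :: l) with hs
    have hptw : ∀ k, poLoads b (i :: l) k =
        poLoads b l k + (if k ∈ A then s - poLoads b l k else 0) := by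
      intro k
      rw [poLoads_cons, ← hs]
      by_cases hk : topOf l.toFinset (b k) = some i
      · rw [if_pos hk, if_pos ((mem_poCounted b).mpr hk)]; ring
      · rw [if_neg hk, if_neg (fun h => hk ((mem_poCounted b).mp h))]; ring
    by_cases hiD : i ∈ D
    · -- load of W increases by at most 1
      have hnonneg : ∀ k, 0 ≤ (if k ∈ A then s - poLoads b l k else 0) := by
        intro k
        split
        · have h1 := loads_le b l hv.1 k
          have h2 := sval_step b hv
          rw [← hs] at h2; linarith
        · exact le_refl 0
      have hsum1 : ∑ k ∈ W, poLoads b (i :: l) k ≤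
          ∑ k ∈ W, poLoads b l k + ∑ k, (if k ∈ A then s - poLoads b l k else 0) := by
        rw [Finset.sum_congr rfl fun k _ => hptw k, Finset.sum_add_distrib]
        exact add_le_add (le_refl _) (Finset.sum_le_sum_of_subset_of_nonneg
          (Finset.subset_univ W) (fun k _ _ => hnonneg k))
      have hsum2 : ∑ k, (if k ∈ A then s - poLoads b l k else 0) = 1 := by
        rw [Finset.sum_ite_mem, Finset.univ_inter, Finset.sum_sub_distrib,
          Finset.sum_const, nsmul_eq_mul]
        have := card_times_sval b hv
        rw [← hA, ← hs] at this
        linarith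
      have hcards : (((i :: l).toFinset ∩ D).card : ℚ) =
          ((l.toFinset ∩ D).card : ℚ) + 1 := by
        have hins : (i :: l).toFinset ∩ D = insert i (l.toFinset ∩ D) := by
          rw [List.toFinset_cons, Finset.insert_inter_of_mem hiD]
        rw [hins, Finset.card_insert_of_notMem (by
          simp only [Finset.mem_inter, List.mem_toFinset, not_and_or]
          exact Or.inl hv.2.1)]
        push_cast; ring
      rw [hcards]
      linarith [hsum1, hsum2, IH]
    · -- W untouched
      have hsame : ∀ k ∈ W, poLoads b (i :: l) k = poLoads b l k := by
        intro k hk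
        obtain ⟨d, hdD, hd⟩ := top_in_D (hW k hk) hnD'
        rw [poLoads_cons, if_neg (by rw [hd]; intro h; exact hiD (by
          obtain rfl : d = i := by simpa using h
          exact hdD))]
      have hcards : (i :: l).toFinset ∩ D = l.toFinset ∩ D := by
        rw [List.toFinset_cons, Finset.insert_inter_of_notMem hiD]
      rw [Finset.sum_congr rfl hsame, hcards]
      exact IH

end Helpers4

set_option maxHeartbeats 1000000 in
/-- Proportionality of Phragmén's ordered method: if `1 ≤ ℓ ≤ M`, `D` is a set of
`ℓ` candidates, and more than `(ℓ/(M+1))·V` of the voters cast ballots whose first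
`ℓ` entries form exactly the set `D` (in any order), then every possible outcome
`E` for `M` seats contains all of `D`. -/
theorem stmt_14 {C : Type} [Fintype C] [DecidableEq C] (n : ℕ)
    (b : Fin n → List C) (hb : ∀ k, (b k).Nodup) (hbne : ∀ k, b k ≠ [])
    (M : ℕ) (hM1 : 1 ≤ M) (hM2 : M ≤ Fintype.card C)
    (ℓ : ℕ) (hl1 : 1 ≤ ℓ) (hl2 : ℓ ≤ M)
    (D : Finset C) (hD : D.card = ℓ)
    (hbig : (ℓ : ℚ) * (n : ℚ) < ((M : ℚ) + 1) *
      ((Finset.univ.filter fun k : Fin n => ((b k).take ℓ).toFinset = D).card : ℚ)) :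
    ∀ E : Finset C, POOutcome b M E → D ⊆ E := by
  rintro E ⟨l, hv, hlen, rfl⟩ d hdD
  by_contra hdE
  set W := Finset.univ.filter (fun k : Fin n => ((b k).take ℓ).toFinset = D) with hWdef
  have hWmem : ∀ k ∈ W, ((b k).take ℓ).toFinset = D := by
    intro k hk; exact (Finset.mem_filter.mp hk).2
  set w : ℚ := (W.card : ℚ) with hwdef
  have hw0 : 0 < w := by
    rcases Nat.eq_zero_or_pos W.card with h | h
    · rw [hwdef, h] at hbig; push_cast at hbig; nlinarith [hbig]
    · rw [hwdef]; exact_mod_cast h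
  have hwn : w ≤ (n : ℚ) := by
    rw [hwdef]
    exact_mod_cast le_trans (Finset.card_filter_le _ _) (le_of_eq (Finset.card_univ.trans
      (Fintype.card_fin n)))
  -- split off the last elected candidate
  obtain ⟨i, l', rfl⟩ : ∃ i l', l = i :: l' := by
    cases l with
    | nil => simp at hlen; omega
    | cons i l' => exact ⟨i, l', rfl⟩
  set E' := l'.toFinset with hE'
  have hnD : ¬ D ⊆ (i :: l').toFinset := fun h => hdE (h hdD)
  have hnD' : ¬ D ⊆ E' := fun h => hnD (h.trans (by
    rw [List.toFinset_cons]; exact Finset.subset_insert _ _))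
  set r' := poLoads b l' with hr'
  set sM := sval b (i :: l') with hsM
  have hvl' : poValid b l' := hv.1
  have hr'nonneg : ∀ k, 0 ≤ r' k := loads_nonneg b l' hvl'
  have hr'le : ∀ k, r' k ≤ sM := fun k =>
    le_trans (loads_le b l' hvl' k) (sval_step b hv)
  have hsM0 : 0 ≤ sM := sval_nonneg b hv
  -- the classes of W-voters by their current top candidate
  set Wd : C → Finset (Fin n) := fun c => W.filter (fun k => topOf E' (b k) = some c)
    with hWd
  have hmaps : ∀ k ∈ W, (topOf E' (b k)).getD i ∈ D \ E' := by
    intro k hk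
    obtain ⟨c, hcD, hc⟩ := top_in_D (hWmem k hk) hnD'
    rw [hc]
    simp only [Option.getD_some, Finset.mem_sdiff]
    exact ⟨hcD, (topOf_mem hc).1⟩
  have hWd_eq : ∀ c ∈ D \ E', Wd c = W.filter (fun k => (topOf E' (b k)).getD i = c) := by
    intro c hc
    apply Finset.filter_congr
    intro k hk
    obtain ⟨c', hc'D, hc'⟩ := top_in_D (hWmem k hk) hnD'
    rw [hc']
    simp only [Option.getD_some, Option.some_inj]
  have hfib : ∀ f : Fin n → ℚ, ∑ c ∈ D \ E', ∑ k ∈ Wd c, f k = ∑ k ∈ W, f k := by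
    intro f
    rw [Finset.sum_congr rfl (fun c hc => by rw [hWd_eq c hc])]
    exact Finset.sum_fiberwise_of_maps_to hmaps f
  -- the D-load bound for l'
  have hWload : ∑ k ∈ W, r' k ≤ ((E' ∩ D).card : ℚ) :=
    wload_le b W D ℓ hWmem l' hvl' hnD'
  have hcardsplit : ((D \ E').card : ℚ) + ((E' ∩ D).card : ℚ) = (ℓ : ℚ) := by
    rw [Finset.inter_comm, ← hD]
    exact_mod_cast Finset.card_sdiff_add_card_inter D E'
  -- find the good candidate d*
  have hdne : d ∈ D \ E' := Finset.mem_sdiff.mpr ⟨hdD, fun h => hdE (by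
    rw [List.toFinset_cons]; exact Finset.mem_insert_of_mem h)⟩
  obtain ⟨d', hd'mem, hd'⟩ : ∃ c ∈ D \ E',
      w * (1 + ∑ k ∈ Wd c, r' k) ≤ (ℓ : ℚ) * ((Wd c).card : ℚ) := by
    by_contra hcon
    push_neg at hcon
    have hlt := Finset.sum_lt_sum_of_nonempty ⟨d, hdne⟩
      (f := fun c => (ℓ : ℚ) * ((Wd c).card : ℚ))
      (g := fun c => w * (1 + ∑ k ∈ Wd c, r' k)) hcon
    rw [← Finset.mul_sum, ← Finset.mul_sum] at hlt
    rw [Finset.sum_add_distrib, Finset.sum_const, hfib] at hlt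
    have hcards : ∑ c ∈ D \ E', ((Wd c).card : ℚ) = w := by
      have := hfib (fun _ => (1 : ℚ))
      simpa [Finset.sum_const, nsmul_eq_mul, hwdef] using this
    rw [hcards, nsmul_eq_mul] at hlt
    nlinarith [hWload, hcardsplit, hlt, hw0]
  set w' : ℚ := ((Wd d').card : ℚ) with hw'
  have hw'0 : 0 < w' := by
    have h1 : w ≤ w * (1 + ∑ k ∈ Wd d', r' k) := by
      have : 0 ≤ ∑ k ∈ Wd d', r' k := Finset.sum_nonneg fun k _ => hr'nonneg k
      nlinarith
    have h2 : 0 < (ℓ : ℚ) * w' := lt_of_lt_of_le hw0 (le_trans h1 hd')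
    have hl0 : 0 < (ℓ : ℚ) := by exact_mod_cast hl1
    nlinarith [h2, hl0]
  -- d' was available at the last step, so sM ≤ t_{d'}
  have hsubA : Wd d' ⊆ poCounted b E' d' := by
    intro k hk
    rw [mem_poCounted]
    exact (Finset.mem_filter.mp hk).2
  have hApos : 0 < (poCounted b E' d').card := by
    have : 0 < (Wd d').card := by rw [hw'] at hw'0; exact_mod_cast hw'0
    exact lt_of_lt_of_le this (Finset.card_le_card hsubA)
  have hd'l' : d' ∉ l' := by
    have := (Finset.mem_sdiff.mp hd'mem).2
    rw [hE'] at this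
    simpa [List.mem_toFinset] using this
  have hmin : sM ≤ poT b r' E' d' := hv.2.2.2 d' hd'l' hApos
  -- drop the non-W ballots from A_{d'}
  set t : ℚ := poT b r' E' d' with ht
  have hAposQ : (0:ℚ) < ((poCounted b E' d').card : ℚ) := by exact_mod_cast hApos
  have htA : t * ((poCounted b E' d').card : ℚ) = 1 + ∑ k ∈ poCounted b E' d', r' k := by
    rw [ht, poT]; field_simp
  have hsdiff : ∑ k ∈ poCounted b E' d', r' k =
      ∑ k ∈ poCounted b E' d' \ Wd d', r' k + ∑ k ∈ Wd d', r' k :=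
    (Finset.sum_sdiff hsubA).symm
  have hX : ∑ k ∈ poCounted b E' d' \ Wd d', r' k ≤
      ((poCounted b E' d' \ Wd d').card : ℚ) * t := by
    calc ∑ k ∈ poCounted b E' d' \ Wd d', r' k
        ≤ ∑ k ∈ poCounted b E' d' \ Wd d', sM := Finset.sum_le_sum fun k _ => hr'le k
      _ = ((poCounted b E' d' \ Wd d').card : ℚ) * sM := by
          rw [Finset.sum_const, nsmul_eq_mul]
      _ ≤ ((poCounted b E' d' \ Wd d').card : ℚ) * t := by
          apply mul_le_mul_of_nonneg_left hmin (by positivity)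
  have hcardA : ((poCounted b E' d').card : ℚ) =
      ((poCounted b E' d' \ Wd d').card : ℚ) + w' := by
    rw [hw']
    exact_mod_cast (Finset.card_sdiff_add_card_eq_card hsubA).symm
  have hkey2 : sM * w' ≤ 1 + ∑ k ∈ Wd d', r' k := by
    have htw : t * w' ≤ 1 + ∑ k ∈ Wd d', r' k := by nlinarith [htA, hsdiff, hX, hcardA]
    nlinarith [hmin, hw'0]
  have hwsM : w * sM ≤ (ℓ : ℚ) := by
    have h1 : w * (sM * w') ≤ w * (1 + ∑ k ∈ Wd d', r' k) :=
      mul_le_mul_of_nonneg_left hkey2 hw0.le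
    nlinarith [hd', hw'0]
  -- total load accounting
  have htot : ∑ k, poLoads b (i :: l') k = (M : ℚ) := by
    rw [sum_loads b (i :: l') hv, hlen]
  have hWfinal : ∑ k ∈ W, poLoads b (i :: l') k ≤ (ℓ : ℚ) - 1 := by
    have h1 := wload_le b W D ℓ hWmem (i :: l') hv hnD
    have h2 : ((i :: l').toFinset ∩ D).card ≤ ℓ - 1 := by
      have hsub : (i :: l').toFinset ∩ D ⊆ D.erase d := by
        intro x hx
        obtain ⟨hx1, hx2⟩ := Finset.mem_inter.mp hx
        exact Finset.mem_erase.mpr ⟨fun h => hdE (h ▸ hx1), hx2⟩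
      calc ((i :: l').toFinset ∩ D).card ≤ (D.erase d).card := Finset.card_le_card hsub
        _ = ℓ - 1 := by rw [Finset.card_erase_of_mem hdD, hD]
    have h2Q : (((i :: l').toFinset ∩ D).card : ℚ) ≤ (ℓ : ℚ) - 1 := by
      have h3 : ((i :: l').toFinset ∩ D).card + 1 ≤ ℓ := by omega
      have h4 := (Nat.cast_le (α := ℚ)).mpr h3
      push_cast at h4
      linarith
    linarith
  have hrest : ∑ k ∈ Finset.univ \ W, poLoads b (i :: l') k ≤ ((n : ℚ) - w) * sM := by
    have hle : ∀ k ∈ Finset.univ \ W, poLoads b (i :: l') k ≤ sM :=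
      fun k _ => loads_le b (i :: l') hv k
    calc ∑ k ∈ Finset.univ \ W, poLoads b (i :: l') k
        ≤ ∑ k ∈ Finset.univ \ W, sM := Finset.sum_le_sum hle
      _ = ((Finset.univ \ W).card : ℚ) * sM := by rw [Finset.sum_const, nsmul_eq_mul]
      _ = ((n : ℚ) - w) * sM := by
          have hWn : W.card ≤ n := le_trans (Finset.card_le_univ W)
            (by simp [Finset.card_univ])
          rw [Finset.card_sdiff_of_subset (Finset.subset_univ W), Finset.card_univ,
            Fintype.card_fin, hwdef, Nat.cast_sub hWn]
  have hsplitsum : (M : ℚ) ≤ ((ℓ : ℚ) - 1) + ((n : ℚ) - w) * sM := by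
    rw [← htot, ← Finset.sum_sdiff (Finset.subset_univ W)]
    linarith [hWfinal, hrest]
  -- final contradiction
  nlinarith [hsplitsum, hwsM, hbig, hw0, hwn, hsM0,
    mul_le_mul_of_nonneg_right hsplitsum hw0.le]
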